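/- arXiv:1202.6001 — 2 statements merged into one kernel-verified Lean document; each statement's English description precedes it below -/
import Mathlib

section
/- (Validity of Proposal.) Fix integers d ≥ 1 and n ≥ 1. For k = 1,…,d let θ^(k)_{ab} ≥ 0 (a,b ∈ {0,1}) and μ^(k) ∈ [0,1]. Let Γ = Θ^(1) ⊗ ⋯ ⊗ Θ^(d), let v : {0,…,2^d−1} → ℕ, let E_c := n·∏_{k=1}^d (μ^(k))^{c_k}(1−μ^(k))^{1−c_k} where c_k is the k-th binary digit of c, let F := {c : E_c ≥ 1} and I := {c : E_c < 1}, and let m_F, m_I ≥ 0 be reals satisfying v_c ≤ m_F·E_c for all c ∈ F and v_c ≤ m_I for all c ∈ I. Define Λ'_{cc'} := Λ^(FF)_{cc'} + Λ^(FI)_{cc'} + Λ^(IF)_{cc'} + Λ^(II)_{cc'}, where Λ^(FF) = ⊗_{k=1}^d (n m_F)^{2/d} M^(FF,k), Λ^(FI) = ⊗_k (n m_F m_I)^{1/d} M^(FI,k), Λ^(IF) = ⊗_k (n m_I m_F)^{1/d} M^(IF,k), Λ^(II) = ⊗_k (m_I)^{2/d} Θ^(k), with M^(FF,k)_{ab}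 = (μ^(k))^a(1−μ^(k))^{1−a}(μ^(k))^b(1−μ^(k))^{1−b}θ^(k)_{ab}, M^(FI,k)_{ab} = (μ^(k))^a(1−μ^(k))^{1−a}θ^(k)_{ab}, and M^(IF,k)_{ab} = (μ^(k))^b(1−μ^(k))^{1−b}θ^(k)_{ab}. Then for all colors 0 ≤ c, c' ≤ 2^d − 1, Λ_{cc'} := v_c · v_{c'} · Γ_{cc'} ≤ Λ'_{cc'}. -/
/-- The `d`-fold Kronecker product `Θ⁽¹⁾ ⊗ Θ⁽²⁾ ⊗ ⋯ ⊗ Θ⁽ᵈ⁾` of `2 × 2` real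
matrices (`Θ k a b` is the `(a,b)` entry of the `(k+1)`-st initiator matrix,
`a, b ∈ {0,1}`), viewed as a `2^d × 2^d` matrix indexed by `0, …, 2^d − 1`, so
that its `(c,c')` entry is `∏_k θ⁽ᵏ⁾_{c_k c'_k}` with `c_k` the binary digits of
`c` (most significant first). -/
noncomputable def kronFold : (ℕ → ℕ → ℕ → ℝ) → ℕ → ℕ → ℕ → ℝ
  | _, 0 => fun _ _ => 1
  | Θ, (d + 1) => fun i j =>
      Θ 0 (i / 2 ^ d) (j / 2 ^ d) *
        kronFold (fun k => Θ (k + 1)) d (i % 2 ^ d) (j % 2 ^ d)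

/-- The `(k+1)`-st most significant binary digit of the color `c ∈ {0,…,2^d−1}`,
i.e. `c_k = ⌊c / 2^(d−1−k)⌋ mod 2` for `k ∈ {0,…,d−1}`. -/
def bitOf (d k c : ℕ) : ℕ := c / 2 ^ (d - 1 - k) % 2

/-- `E_c`, the expected number of nodes of color `c` among `n` nodes whose
attribute bits are independent Bernoulli(`μ⁽ᵏ⁾`):
`E_c = n · ∏_{k=1}^d (μ⁽ᵏ⁾)^{c_k} (1−μ⁽ᵏ⁾)^{1−c_k}`. -/
noncomputable def Ecol (n d : ℕ) (μ : ℕ → ℝ) (c : ℕ) : ℝ :=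
  (n : ℝ) * ∏ k ∈ Finset.range d,
    μ k ^ bitOf d k c * (1 - μ k) ^ (1 - bitOf d k c)

/-- Initiator matrices `(n m_F)^{2/d} M^(FF,k)` of the frequent–frequent
proposal component, `M^(FF,k)_{ab} = μ^a(1−μ)^{1−a} μ^b(1−μ)^{1−b} θ_{ab}`. -/
noncomputable def thetaFF (d n : ℕ) (μ : ℕ → ℝ) (θ : ℕ → ℕ → ℕ → ℝ) (mF : ℝ) :
    ℕ → ℕ → ℕ → ℝ := fun k a b =>
  ((n : ℝ) * mF) ^ ((2 : ℝ) / (d : ℝ)) *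
    (μ k ^ a * (1 - μ k) ^ (1 - a) * (μ k ^ b * (1 - μ k) ^ (1 - b)) * θ k a b)

/-- Initiator matrices `(n m_F m_I)^{1/d} M^(FI,k)` of the frequent–infrequent
proposal component, `M^(FI,k)_{ab} = μ^a(1−μ)^{1−a} θ_{ab}`. -/
noncomputable def thetaFI (d n : ℕ) (μ : ℕ → ℝ) (θ : ℕ → ℕ → ℕ → ℝ) (mF mI : ℝ) :
    ℕ → ℕ → ℕ → ℝ := fun k a b =>
  ((n : ℝ) * mF * mI) ^ ((1 : ℝ) / (d : ℝ)) *
    (μ k ^ a * (1 - μ k) ^ (1 - a) * θ k a b)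

/-- Initiator matrices `(n m_I m_F)^{1/d} M^(IF,k)` of the infrequent–frequent
proposal component, `M^(IF,k)_{ab} = μ^b(1−μ)^{1−b} θ_{ab}`. -/
noncomputable def thetaIF (d n : ℕ) (μ : ℕ → ℝ) (θ : ℕ → ℕ → ℕ → ℝ) (mF mI : ℝ) :
    ℕ → ℕ → ℕ → ℝ := fun k a b =>
  ((n : ℝ) * mI * mF) ^ ((1 : ℝ) / (d : ℝ)) *
    (μ k ^ b * (1 - μ k) ^ (1 - b) * θ k a b)

/-- Initiator matrices `(m_I)^{2/d} Θ⁽ᵏ⁾` of the infrequent–infrequent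
proposal component. -/
noncomputable def thetaII (d : ℕ) (θ : ℕ → ℕ → ℕ → ℝ) (mI : ℝ) :
    ℕ → ℕ → ℕ → ℝ := fun k a b =>
  mI ^ ((2 : ℝ) / (d : ℝ)) * θ k a b

lemma bit_mod (c j d : ℕ) (h : j < d) : (c % 2 ^ d) / 2 ^ j % 2 = c / 2 ^ j % 2 := by
  rw [← Nat.mod_mul_right_div_self, ← Nat.mod_mul_right_div_self, ← pow_succ,
    Nat.mod_mod_of_dvd _ (pow_dvd_pow 2 h)]

lemma bit_succ (d k c : ℕ) (hk : k < d) :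
    bitOf (d + 1) (k + 1) c = bitOf d k (c % 2 ^ d) := by
  unfold bitOf
  rw [show d + 1 - 1 - (k + 1) = d - 1 - k by omega, bit_mod c (d - 1 - k) d (by omega)]

lemma bit_zero (d c : ℕ) (hc : c < 2 ^ (d + 1)) : bitOf (d + 1) 0 c = c / 2 ^ d := by
  unfold bitOf
  simp only [Nat.add_sub_cancel, Nat.sub_zero]
  exact Nat.mod_eq_of_lt (Nat.div_lt_of_lt_mul (by rw [← pow_succ]; exact hc))

lemma kronFold_eq_prod : ∀ (d : ℕ) (θ : ℕ → ℕ → ℕ → ℝ) (c c' : ℕ),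
    c < 2 ^ d → c' < 2 ^ d →
    kronFold θ d c c' = ∏ k ∈ Finset.range d, θ k (bitOf d k c) (bitOf d k c')
  | 0, θ, c, c', _, _ => by simp [kronFold]
  | d + 1, θ, c, c', hc, hc' => by
    rw [kronFold, Finset.prod_range_succ', bit_zero d c hc, bit_zero d c' hc']
    simp only []
    rw [kronFold_eq_prod d (fun k => θ (k + 1)) (c % 2 ^ d) (c' % 2 ^ d)
        (Nat.mod_lt _ (by positivity)) (Nat.mod_lt _ (by positivity))]
    rw [mul_comm]
    congr 1
    exact Finset.prod_congr rfl fun k hk => by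
      rw [bit_succ d k c (Finset.mem_range.mp hk), bit_succ d k c' (Finset.mem_range.mp hk)]

lemma rpow_div_pow (x y : ℝ) (hx : 0 ≤ x) {d : ℕ} (hd : d ≠ 0) :
    (x ^ (y / (d : ℝ))) ^ d = x ^ y := by
  rw [← Real.rpow_natCast (x ^ (y / (d : ℝ))) d, ← Real.rpow_mul hx,
    div_mul_cancel₀ _ (Nat.cast_ne_zero.mpr hd)]

/-- **Validity of the proposal (Theorem 3 of the paper).**
With `Γ = Θ⁽¹⁾ ⊗ ⋯ ⊗ Θ⁽ᵈ⁾`, frequent colors `F = {c : E_c ≥ 1}`, infrequent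
colors `I = {c : E_c < 1}`, and `m_F, m_I ≥ 0` satisfying `v_c ≤ m_F E_c` on `F`
and `v_c ≤ m_I` on `I`, the rate `Λ_{cc'} = v_c v_{c'} Γ_{cc'}` is bounded by
`Λ'_{cc'} = Λ^(FF)_{cc'} + Λ^(FI)_{cc'} + Λ^(IF)_{cc'} + Λ^(II)_{cc'}` for all
colors `0 ≤ c, c' ≤ 2^d − 1`. -/
theorem proposal_validity (d n : ℕ) (hd : 1 ≤ d) (hn : 1 ≤ n)
    (θ : ℕ → ℕ → ℕ → ℝ) (hθ : ∀ k a b, 0 ≤ θ k a b)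
    (μ : ℕ → ℝ) (hμ : ∀ k, μ k ∈ Set.Icc (0 : ℝ) 1)
    (v : ℕ → ℕ) (mF mI : ℝ) (hmF : 0 ≤ mF) (hmI : 0 ≤ mI)
    (hF : ∀ c < 2 ^ d, 1 ≤ Ecol n d μ c → (v c : ℝ) ≤ mF * Ecol n d μ c)
    (hI : ∀ c < 2 ^ d, Ecol n d μ c < 1 → (v c : ℝ) ≤ mI)
    (c c' : ℕ) (hc : c < 2 ^ d) (hc' : c' < 2 ^ d) :
    (v c : ℝ) * (v c' : ℝ) * kronFold θ d c c'
      ≤ kronFold (thetaFF d n μ θ mF) d c c'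
        + kronFold (thetaFI d n μ θ mF mI) d c c'
        + kronFold (thetaIF d n μ θ mF mI) d c c'
        + kronFold (thetaII d θ mI) d c c' := by

  have hd0 : d ≠ 0 := by omega
  set P : ℕ → ℕ → ℝ := fun k x => μ k ^ bitOf d k x * (1 - μ k) ^ (1 - bitOf d k x) with hP
  have hPnn : ∀ k x, 0 ≤ P k x := fun k x => by
    have h1 := (hμ k).1; have h2 := (hμ k).2
    exact mul_nonneg (pow_nonneg h1 _) (pow_nonneg (by linarith) _)
  set G : ℝ := ∏ k ∈ Finset.range d, θ k (bitOf d k c) (bitOf d k c') with hG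
  have hGnn : 0 ≤ G := Finset.prod_nonneg fun k _ => hθ _ _ _
  have hPc : (0:ℝ) ≤ ∏ k ∈ Finset.range d, P k c := Finset.prod_nonneg fun k _ => hPnn k c
  have hPc' : (0:ℝ) ≤ ∏ k ∈ Finset.range d, P k c' := Finset.prod_nonneg fun k _ => hPnn k c'
  have hnmF : (0:ℝ) ≤ (n:ℝ) * mF := by positivity
  -- closed forms
  have eG : kronFold θ d c c' = G := kronFold_eq_prod d θ c c' hc hc'
  have eFF : kronFold (thetaFF d n μ θ mF) d c c'
      = ((n:ℝ) * mF) ^ 2 * ((∏ k ∈ Finset.range d, P k c) * (∏ k ∈ Finset.range d, P k c') * G) := by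
    rw [kronFold_eq_prod d _ c c' hc hc']
    simp only [thetaFF, Finset.prod_mul_distrib, Finset.prod_const, Finset.card_range]
    rw [rpow_div_pow _ _ hnmF hd0, Real.rpow_two]
    simp only [hP, hG, Finset.prod_mul_distrib]
  have eFI : kronFold (thetaFI d n μ θ mF mI) d c c'
      = (n:ℝ) * mF * mI * ((∏ k ∈ Finset.range d, P k c) * G) := by
    rw [kronFold_eq_prod d _ c c' hc hc']
    simp only [thetaFI, Finset.prod_mul_distrib, Finset.prod_const, Finset.card_range]
    rw [rpow_div_pow _ _ (by positivity) hd0, Real.rpow_one]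
    simp only [hP, hG, Finset.prod_mul_distrib]
  have eIF : kronFold (thetaIF d n μ θ mF mI) d c c'
      = (n:ℝ) * mI * mF * ((∏ k ∈ Finset.range d, P k c') * G) := by
    rw [kronFold_eq_prod d _ c c' hc hc']
    simp only [thetaIF, Finset.prod_mul_distrib, Finset.prod_const, Finset.card_range]
    rw [rpow_div_pow _ _ (by positivity) hd0, Real.rpow_one]
    simp only [hP, hG, Finset.prod_mul_distrib]
  have eII : kronFold (thetaII d θ mI) d c c' = mI ^ 2 * G := by
    rw [kronFold_eq_prod d _ c c' hc hc']
    simp only [thetaII, Finset.prod_mul_distrib, Finset.prod_const, Finset.card_range]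
    rw [rpow_div_pow _ _ hmI hd0, Real.rpow_two]
  rw [eG, eFF, eFI, eIF, eII]
  have hEc : Ecol n d μ c = (n:ℝ) * ∏ k ∈ Finset.range d, P k c := rfl
  have hEc' : Ecol n d μ c' = (n:ℝ) * ∏ k ∈ Finset.range d, P k c' := rfl
  have hvnn : (0:ℝ) ≤ (v c : ℝ) := Nat.cast_nonneg _
  have hvnn' : (0:ℝ) ≤ (v c' : ℝ) := Nat.cast_nonneg _
  have tFF : (0:ℝ) ≤ ((n:ℝ) * mF) ^ 2 * ((∏ k ∈ Finset.range d, P k c) * (∏ k ∈ Finset.range d, P k c') * G) := by positivity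
  have tFI : (0:ℝ) ≤ (n:ℝ) * mF * mI * ((∏ k ∈ Finset.range d, P k c) * G) := by positivity
  have tIF : (0:ℝ) ≤ (n:ℝ) * mI * mF * ((∏ k ∈ Finset.range d, P k c') * G) := by positivity
  have tII : (0:ℝ) ≤ mI ^ 2 * G := by positivity
  rcases le_or_gt 1 (Ecol n d μ c) with hc1 | hc1 <;>
    rcases le_or_gt 1 (Ecol n d μ c') with hc2 | hc2
  · have h1 := hF c hc hc1
    have h2 := hF c' hc' hc2
    rw [hEc] at h1; rw [hEc'] at h2
    have key : (v c : ℝ) * (v c' : ℝ) * G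
        ≤ ((n:ℝ) * mF) ^ 2 * ((∏ k ∈ Finset.range d, P k c) * (∏ k ∈ Finset.range d, P k c') * G) := by
      calc (v c : ℝ) * (v c' : ℝ) * G
          ≤ (mF * ((n:ℝ) * ∏ k ∈ Finset.range d, P k c)) * (mF * ((n:ℝ) * ∏ k ∈ Finset.range d, P k c')) * G :=
            mul_le_mul_of_nonneg_right (mul_le_mul h1 h2 hvnn' (by positivity)) hGnn
        _ = ((n:ℝ) * mF) ^ 2 * ((∏ k ∈ Finset.range d, P k c) * (∏ k ∈ Finset.range d, P k c') * G) := by ring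
    linarith
  · have h1 := hF c hc hc1
    have h2 := hI c' hc' hc2
    rw [hEc] at h1
    have key : (v c : ℝ) * (v c' : ℝ) * G
        ≤ (n:ℝ) * mF * mI * ((∏ k ∈ Finset.range d, P k c) * G) := by
      calc (v c : ℝ) * (v c' : ℝ) * G
          ≤ (mF * ((n:ℝ) * ∏ k ∈ Finset.range d, P k c)) * mI * G :=
            mul_le_mul_of_nonneg_right (mul_le_mul h1 h2 hvnn' (by positivity)) hGnn
        _ = (n:ℝ) * mF * mI * ((∏ k ∈ Finset.range d, P k c) * G) := by ring
    linarith
  · have h1 := hI c hc hc1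
    have h2 := hF c' hc' hc2
    rw [hEc'] at h2
    have key : (v c : ℝ) * (v c' : ℝ) * G
        ≤ (n:ℝ) * mI * mF * ((∏ k ∈ Finset.range d, P k c') * G) := by
      calc (v c : ℝ) * (v c' : ℝ) * G
          ≤ mI * (mF * ((n:ℝ) * ∏ k ∈ Finset.range d, P k c')) * G :=
            mul_le_mul_of_nonneg_right (mul_le_mul h1 h2 hvnn' hmI) hGnn
        _ = (n:ℝ) * mI * mF * ((∏ k ∈ Finset.range d, P k c') * G) := by ring
    linarith
  · have h1 := hI c hc hc1
    have h2 := hI c' hc' hc2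
    have key : (v c : ℝ) * (v c' : ℝ) * G ≤ mI ^ 2 * G := by
      calc (v c : ℝ) * (v c' : ℝ) * G
          ≤ mI * mI * G := mul_le_mul_of_nonneg_right (mul_le_mul h1 h2 hvnn' hmI) hGnn
        _ = mI ^ 2 * G := by ring
    linarith
end

section
/- The sequence n · ( (1/log₂ n) · (1 − (log₂ n)/n) / (1 − 1/n) )^{log₂ n} tends to 0 as n → ∞ (n ranging over natural numbers n ≥ 5). -/
open Filter Real

private lemma logb_le_self' {n : ℕ} (hn : 1 ≤ n) : Real.logb 2 n ≤ n := by
  have hx : (0:ℝ) < n := by exact_mod_cast hn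
  rw [Real.logb_le_iff_le_rpow one_lt_two hx, Real.rpow_natCast]
  exact_mod_cast (Nat.lt_two_pow_self (n := n)).le

private lemma aux_tendsto :
    Filter.Tendsto (fun n : ℕ => (n : ℝ) * (1 / Real.logb 2 n) ^ Real.logb 2 n)
      Filter.atTop (nhds 0) := by
  have ht : Tendsto (fun n : ℕ => Real.logb 2 (n:ℝ)) atTop atTop :=
    (Real.tendsto_logb_atTop one_lt_two).comp tendsto_natCast_atTop_atTop
  have hinner : Tendsto (fun t : ℝ => t * (Real.log 2 - Real.log t)) atTop atBot := by
    refine tendsto_atBot_mono' atTop (f₁ := fun t : ℝ => Real.log 2 - Real.log t) ?_ ?_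
    · filter_upwards [eventually_ge_atTop (2:ℝ)] with t ht2
      have h1 : (1:ℝ) ≤ t := by linarith
      have ha : Real.log 2 - Real.log t ≤ 0 := by
        have := Real.log_le_log (by norm_num) ht2
        linarith
      calc t * (Real.log 2 - Real.log t) ≤ 1 * (Real.log 2 - Real.log t) :=
            mul_le_mul_of_nonpos_right h1 ha
        _ = Real.log 2 - Real.log t := one_mul _
    · simpa [sub_eq_add_neg] using
        tendsto_atBot_add_const_left atTop (Real.log 2)
          (tendsto_neg_atTop_atBot.comp Real.tendsto_log_atTop)
  have hexp : Tendsto (fun n : ℕ =>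
      Real.exp (Real.logb 2 n * (Real.log 2 - Real.log (Real.logb 2 n))))
      atTop (nhds 0) :=
    Real.tendsto_exp_atBot.comp (hinner.comp ht)
  apply hexp.congr'
  filter_upwards [eventually_ge_atTop 4] with n hn
  have hn1 : (4:ℝ) ≤ n := by exact_mod_cast hn
  have hnpos : (0:ℝ) < n := by linarith
  have ht1 : (1:ℝ) < Real.logb 2 n := by
    rw [Real.lt_logb_iff_rpow_lt one_lt_two hnpos]
    calc (2:ℝ) ^ (1:ℝ) = 2 := Real.rpow_one 2
      _ < 4 := by norm_num
      _ ≤ n := hn1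
  have htpos : (0:ℝ) < Real.logb 2 n := by linarith
  symm
  rw [Real.rpow_def_of_pos (by positivity)]
  nth_rewrite 1 [← Real.exp_log hnpos]
  rw [← Real.exp_add]
  congr 1
  rw [Real.log_div one_ne_zero (ne_of_gt htpos), Real.log_one, Real.logb]
  have h2 : Real.log 2 ≠ 0 := ne_of_gt (Real.log_pos one_lt_two)
  field_simp
  ring

/-- **Vanishing of the union bound over infrequent colors.**
The sequence `n · ((1/log₂ n) · (1 − (log₂ n)/n) / (1 − 1/n))^{log₂ n}` tends to
`0` as `n → ∞` (for `n ≥ 5` the base is well defined and positive). -/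
theorem infrequent_union_bound_tendsto_zero :
    Filter.Tendsto
      (fun n : ℕ =>
        (n : ℝ) *
          ((1 / Real.logb 2 n) * (1 - Real.logb 2 n / (n : ℝ)) /
              (1 - 1 / (n : ℝ))) ^ Real.logb 2 n)
      Filter.atTop (nhds 0) := by
  apply squeeze_zero' ?_ ?_ aux_tendsto
  · filter_upwards [eventually_ge_atTop 4] with n hn
    have hnpos : (0:ℝ) < n := by exact_mod_cast Nat.lt_of_lt_of_le (by omega) hn
    have ht : Real.logb 2 n ≤ n := logb_le_self' (by omega)
    have ht1 : (1:ℝ) ≤ Real.logb 2 n := by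
      rw [Real.le_logb_iff_rpow_le one_lt_two hnpos, Real.rpow_one]
      have : (4:ℝ) ≤ n := by exact_mod_cast hn
      linarith
    have hbase : 0 ≤ (1 / Real.logb 2 n) * (1 - Real.logb 2 n / (n : ℝ)) /
        (1 - 1 / (n : ℝ)) := by
      apply div_nonneg
      · apply mul_nonneg (by positivity)
        have : Real.logb 2 n / n ≤ 1 := by
          rw [div_le_one hnpos]; exact ht
        linarith
      · have : 1 / (n:ℝ) ≤ 1 := by
          rw [div_le_one hnpos]; linarith
        linarith
    positivity
  · filter_upwards [eventually_ge_atTop 4] with n hn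
    have hnpos : (0:ℝ) < n := by exact_mod_cast Nat.lt_of_lt_of_le (by omega) hn
    have hn4 : (4:ℝ) ≤ n := by exact_mod_cast hn
    have ht : Real.logb 2 n ≤ n := logb_le_self' (by omega)
    have ht1 : (1:ℝ) ≤ Real.logb 2 n := by
      rw [Real.le_logb_iff_rpow_le one_lt_two hnpos, Real.rpow_one]
      linarith
    have htpos : (0:ℝ) < Real.logb 2 n := by linarith
    have hd : 0 < 1 - 1 / (n:ℝ) := by
      have : 1 / (n:ℝ) < 1 := by rw [div_lt_one hnpos]; linarith
      linarith
    have hB0 : 0 ≤ (1 / Real.logb 2 n) * (1 - Real.logb 2 n / (n : ℝ)) /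
        (1 - 1 / (n : ℝ)) := by
      apply div_nonneg _ hd.le
      apply mul_nonneg (by positivity)
      have : Real.logb 2 n / n ≤ 1 := by rw [div_le_one hnpos]; exact ht
      linarith
    have hBle : (1 / Real.logb 2 n) * (1 - Real.logb 2 n / (n : ℝ)) /
        (1 - 1 / (n : ℝ)) ≤ 1 / Real.logb 2 n := by
      rw [mul_div_assoc]
      have hle1 : (1 - Real.logb 2 n / (n : ℝ)) / (1 - 1 / (n : ℝ)) ≤ 1 := by
        rw [div_le_one hd]
        have : 1 / (n:ℝ) ≤ Real.logb 2 n / n := by gcongr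
        linarith
      calc (1 / Real.logb 2 n) * ((1 - Real.logb 2 n / (n : ℝ)) / (1 - 1 / (n : ℝ)))
          ≤ (1 / Real.logb 2 n) * 1 := by
            apply mul_le_mul_of_nonneg_left hle1 (by positivity)
        _ = 1 / Real.logb 2 n := mul_one _
    have := Real.rpow_le_rpow hB0 hBle htpos.le
    exact mul_le_mul_of_nonneg_left this hnpos.le
end
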